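/- The modified Bessel function ratio A(κ) = I₁(κ)/I₀(κ) tends to 1 as κ → ∞. -/

import Mathlib

open Real Filter

noncomputable def besselI0 (κ : ℝ) : ℝ :=
  (1 / Real.pi) * ∫ t in (0:ℝ)..Real.pi, Real.exp (κ * Real.cos t)

noncomputable def besselI1 (κ : ℝ) : ℝ :=
  (1 / Real.pi) * ∫ t in (0:ℝ)..Real.pi, Real.exp (κ * Real.cos t) * Real.cos t

namespace BesselAux

noncomputable def f (κ : ℝ) : ℝ := ∫ t in (0:ℝ)..Real.pi, Real.exp (κ * Real.cos t)

noncomputable def g (κ : ℝ) : ℝ :=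
  ∫ t in (0:ℝ)..Real.pi, Real.exp (κ * Real.cos t) * Real.cos t

noncomputable def D (κ : ℝ) : ℝ :=
  ∫ t in (0:ℝ)..Real.pi, Real.exp (κ * Real.cos t) * (1 - Real.cos t)

lemma cont1 (κ : ℝ) : Continuous fun t => Real.exp (κ * Real.cos t) := by continuity

lemma cont2 (κ : ℝ) : Continuous fun t => Real.exp (κ * Real.cos t) * Real.cos t := by
  continuity

lemma cont3 (κ : ℝ) : Continuous fun t => Real.exp (κ * Real.cos t) * (1 - Real.cos t) := by
  continuity

lemma f_sub_g (κ : ℝ) : f κ - g κ = D κ := by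
  unfold f g D
  rw [← intervalIntegral.integral_sub ((cont1 κ).intervalIntegrable _ _)
    ((cont2 κ).intervalIntegrable _ _)]
  congr 1
  ext t
  ring

lemma D_nonneg (κ : ℝ) : 0 ≤ D κ := by
  apply intervalIntegral.integral_nonneg Real.pi_pos.le
  intro t _
  have h1 : Real.cos t ≤ 1 := Real.cos_le_one t
  have h2 := Real.exp_pos (κ * Real.cos t)
  nlinarith

-- ∫₀^{π/2} sin t * exp(κ cos t) dt = (e^κ - 1)/κ
lemma integral_sin_exp (κ : ℝ) (hκ : 0 < κ) :
    ∫ t in (0:ℝ)..(Real.pi/2), Real.sin t * Real.exp (κ * Real.cos t)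
      = (Real.exp κ - 1) / κ := by
  have key : ∀ t ∈ Set.uIcc (0:ℝ) (Real.pi/2),
      HasDerivAt (fun t => -Real.exp (κ * Real.cos t) / κ)
        (Real.sin t * Real.exp (κ * Real.cos t)) t := by
    intro t _
    have h : HasDerivAt (fun t => -Real.exp (κ * Real.cos t) / κ)
        (-(Real.exp (κ * Real.cos t) * (κ * -Real.sin t)) / κ) t :=
      ((((Real.hasDerivAt_cos t).const_mul κ).exp).neg).div_const κ
    convert h using 1
    field_simp
  have := intervalIntegral.integral_eq_sub_of_hasDerivAt key
    (((Real.continuous_sin.mul (cont1 κ))).intervalIntegrable _ _)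
  rw [this]
  simp [Real.cos_pi_div_two]
  field_simp
  ring

lemma one_sub_cos_le_sin {t : ℝ} (h0 : 0 ≤ t) (h1 : t ≤ Real.pi/2) :
    1 - Real.cos t ≤ Real.sin t := by
  have hs : 0 ≤ Real.sin t := Real.sin_nonneg_of_nonneg_of_le_pi h0
    (le_trans h1 (by linarith [Real.pi_pos]))
  have hc : 0 ≤ Real.cos t := Real.cos_nonneg_of_mem_Icc ⟨by linarith [Real.pi_pos], h1⟩
  nlinarith [Real.sin_sq_add_cos_sq t]

lemma D_le (κ : ℝ) (hκ : 1 ≤ κ) : D κ ≤ Real.exp κ / κ + Real.pi := by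
  have hκ0 : 0 < κ := by linarith
  have hsplit : D κ = (∫ t in (0:ℝ)..(Real.pi/2), Real.exp (κ * Real.cos t) * (1 - Real.cos t))
      + ∫ t in (Real.pi/2)..Real.pi, Real.exp (κ * Real.cos t) * (1 - Real.cos t) := by
    unfold D
    rw [intervalIntegral.integral_add_adjacent_intervals ((cont3 κ).intervalIntegrable _ _)
      ((cont3 κ).intervalIntegrable _ _)]
  rw [hsplit]
  have hpi := Real.pi_pos
  have h1 : (∫ t in (0:ℝ)..(Real.pi/2), Real.exp (κ * Real.cos t) * (1 - Real.cos t))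
      ≤ Real.exp κ / κ := by
    calc (∫ t in (0:ℝ)..(Real.pi/2), Real.exp (κ * Real.cos t) * (1 - Real.cos t))
        ≤ ∫ t in (0:ℝ)..(Real.pi/2), Real.sin t * Real.exp (κ * Real.cos t) := by
          apply intervalIntegral.integral_mono_on (by linarith)
            ((cont3 κ).intervalIntegrable _ _)
            ((Real.continuous_sin.mul (cont1 κ)).intervalIntegrable _ _)
          intro t ht
          have := one_sub_cos_le_sin ht.1 ht.2
          have he : 0 < Real.exp (κ * Real.cos t) := Real.exp_pos _
          show Real.exp (κ * Real.cos t) * (1 - Real.cos t) ≤ Real.sin t * Real.exp (κ * Real.cos t)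
          nlinarith
      _ = (Real.exp κ - 1) / κ := integral_sin_exp κ hκ0
      _ ≤ Real.exp κ / κ := by
          gcongr
          linarith
  have h2 : (∫ t in (Real.pi/2)..Real.pi, Real.exp (κ * Real.cos t) * (1 - Real.cos t))
      ≤ Real.pi := by
    have : (∫ t in (Real.pi/2)..Real.pi, Real.exp (κ * Real.cos t) * (1 - Real.cos t))
        ≤ ∫ _t in (Real.pi/2)..Real.pi, (2:ℝ) := by
      apply intervalIntegral.integral_mono_on (by linarith)
        ((cont3 κ).intervalIntegrable _ _) (intervalIntegrable_const)
      intro t ht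
      have hc0 : Real.cos t ≤ 0 :=
        Real.cos_nonpos_of_pi_div_two_le_of_le ht.1 (by linarith [ht.2])
      have hc1 : -1 ≤ Real.cos t := Real.neg_one_le_cos t
      have he : Real.exp (κ * Real.cos t) ≤ 1 := by
        rw [← Real.exp_zero]
        exact Real.exp_le_exp.mpr (by nlinarith)
      have he0 : 0 < Real.exp (κ * Real.cos t) := Real.exp_pos _
      nlinarith
    rw [intervalIntegral.integral_const, smul_eq_mul] at this
    linarith
  linarith

lemma f_ge (κ : ℝ) (hκ : 1 ≤ κ) : Real.exp (κ - 1/2) / Real.sqrt κ ≤ f κ := by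
  have hκ0 : 0 < κ := by linarith
  set δ := 1 / Real.sqrt κ with hδdef
  have hsq : 0 < Real.sqrt κ := Real.sqrt_pos.mpr hκ0
  have hsq1 : 1 ≤ Real.sqrt κ := by
    rw [show (1:ℝ) = Real.sqrt 1 by simp]
    exact Real.sqrt_le_sqrt hκ
  have hδ0 : 0 < δ := by positivity
  have hδ1 : δ ≤ 1 := by
    rw [hδdef, div_le_one hsq]; exact hsq1
  have hδpi : δ ≤ Real.pi := le_trans hδ1 (by linarith [Real.pi_gt_three])
  have hsplit : f κ = (∫ t in (0:ℝ)..δ, Real.exp (κ * Real.cos t))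
      + ∫ t in δ..Real.pi, Real.exp (κ * Real.cos t) := by
    unfold f
    rw [intervalIntegral.integral_add_adjacent_intervals ((cont1 κ).intervalIntegrable _ _)
      ((cont1 κ).intervalIntegrable _ _)]
  have h2 : 0 ≤ ∫ t in δ..Real.pi, Real.exp (κ * Real.cos t) :=
    intervalIntegral.integral_nonneg hδpi (fun t _ => (Real.exp_pos _).le)
  have h1 : δ * Real.exp (κ * Real.cos δ) ≤ ∫ t in (0:ℝ)..δ, Real.exp (κ * Real.cos t) := by
    have : (∫ _t in (0:ℝ)..δ, Real.exp (κ * Real.cos δ))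
        ≤ ∫ t in (0:ℝ)..δ, Real.exp (κ * Real.cos t) := by
      apply intervalIntegral.integral_mono_on hδ0.le intervalIntegrable_const
        ((cont1 κ).intervalIntegrable _ _)
      intro t ht
      apply Real.exp_le_exp.mpr
      apply mul_le_mul_of_nonneg_left _ hκ0.le
      exact Real.cos_le_cos_of_nonneg_of_le_pi ht.1 hδpi ht.2
    rw [intervalIntegral.integral_const, smul_eq_mul, sub_zero] at this
    exact this
  have hcosδ : 1 - δ^2/2 ≤ Real.cos δ := Real.one_sub_sq_div_two_le_cos
  have hδsq : δ^2 = 1/κ := by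
    rw [hδdef, div_pow, one_pow, Real.sq_sqrt hκ0.le]
  have hexp : Real.exp (κ - 1/2) ≤ Real.exp (κ * Real.cos δ) := by
    apply Real.exp_le_exp.mpr
    have : κ * (1 - δ^2/2) ≤ κ * Real.cos δ := mul_le_mul_of_nonneg_left hcosδ hκ0.le
    calc κ - 1/2 = κ * (1 - δ^2/2) := by rw [hδsq]; field_simp
      _ ≤ κ * Real.cos δ := this
  calc Real.exp (κ - 1/2) / Real.sqrt κ = δ * Real.exp (κ - 1/2) := by
        rw [hδdef]; ring
    _ ≤ δ * Real.exp (κ * Real.cos δ) := by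
        exact mul_le_mul_of_nonneg_left hexp hδ0.le
    _ ≤ ∫ t in (0:ℝ)..δ, Real.exp (κ * Real.cos t) := h1
    _ ≤ f κ := by rw [hsplit]; linarith

lemma f_pos (κ : ℝ) (hκ : 1 ≤ κ) : 0 < f κ := by
  have := f_ge κ hκ
  have : 0 < Real.exp (κ - 1/2) / Real.sqrt κ := by positivity
  linarith [f_ge κ hκ]

noncomputable def B (κ : ℝ) : ℝ :=
  Real.exp (1/2) / Real.sqrt κ + Real.pi * Real.exp (1/2) * (Real.sqrt κ * Real.exp (-κ))

lemma ratio_le (κ : ℝ) (hκ : 1 ≤ κ) : D κ / f κ ≤ B κ := by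
  have hκ0 : 0 < κ := by linarith
  have hfpos := f_pos κ hκ
  have hlow : 0 < Real.exp (κ - 1/2) / Real.sqrt κ := by positivity
  have hsq : 0 < Real.sqrt κ := Real.sqrt_pos.mpr hκ0
  have h := div_le_div₀ (by positivity : (0:ℝ) ≤ Real.exp κ / κ + Real.pi)
    (D_le κ hκ) hlow (f_ge κ hκ)
  refine h.trans_eq ?_
  rw [Real.exp_sub]
  unfold B
  rw [Real.exp_neg]
  have h1 : Real.exp (1/2:ℝ) ≠ 0 := (Real.exp_pos _).ne'
  have h2 : Real.exp κ ≠ 0 := (Real.exp_pos _).ne'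
  field_simp
  ring_nf
  rw [Real.sq_sqrt hκ0.le]

lemma B_tendsto : Tendsto B atTop (nhds 0) := by
  have hsqrt : Tendsto Real.sqrt atTop atTop := by
    have h := tendsto_rpow_atTop (show (0:ℝ) < 1/2 by norm_num)
    apply h.congr'
    filter_upwards [eventually_ge_atTop (0:ℝ)] with x _
    exact (Real.sqrt_eq_rpow x).symm
  have h1 : Tendsto (fun κ : ℝ => Real.exp (1/2) / Real.sqrt κ) atTop (nhds 0) :=
    Tendsto.div_atTop tendsto_const_nhds hsqrt
  have h2 : Tendsto (fun κ : ℝ => Real.sqrt κ * Real.exp (-κ)) atTop (nhds 0) := by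
    have hb : Tendsto (fun κ : ℝ => κ ^ 1 * Real.exp (-κ)) atTop (nhds 0) :=
      Real.tendsto_pow_mul_exp_neg_atTop_nhds_zero 1
    apply squeeze_zero_norm' _ (by simpa using hb)
    filter_upwards [eventually_ge_atTop (1:ℝ)] with κ hκ
    have hκ0 : (0:ℝ) ≤ κ := by linarith
    have hs : Real.sqrt κ ≤ κ := by
      calc Real.sqrt κ ≤ Real.sqrt (κ^2) := Real.sqrt_le_sqrt (by nlinarith)
        _ = κ := Real.sqrt_sq hκ0
    rw [Real.norm_eq_abs, abs_of_nonneg (by positivity)]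
    exact mul_le_mul_of_nonneg_right hs (Real.exp_pos _).le
  have hfin := h1.add ((h2.const_mul (Real.pi * Real.exp (1/2))))
  unfold B
  simpa using hfin

lemma ratio_tendsto : Tendsto (fun κ => D κ / f κ) atTop (nhds 0) := by
  apply squeeze_zero' _ _ B_tendsto
  · filter_upwards [eventually_ge_atTop (1:ℝ)] with κ hκ
    exact div_nonneg (D_nonneg κ) (f_pos κ hκ).le
  · filter_upwards [eventually_ge_atTop (1:ℝ)] with κ hκ
    exact ratio_le κ hκ

end BesselAux

theorem besselRatio_tendsto_one :
    Tendsto (fun κ : ℝ => besselI1 κ / besselI0 κ) atTop (nhds 1) := by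
  have key : Tendsto (fun κ => 1 - BesselAux.D κ / BesselAux.f κ) atTop (nhds 1) := by
    have := (tendsto_const_nhds (x := (1:ℝ)) (f := atTop)).sub BesselAux.ratio_tendsto
    simpa using this
  apply key.congr'
  filter_upwards [eventually_ge_atTop (1:ℝ)] with κ hκ
  have hfpos := BesselAux.f_pos κ hκ
  have hfg := BesselAux.f_sub_g κ
  have hπ : (Real.pi:ℝ) ≠ 0 := Real.pi_ne_zero
  show 1 - BesselAux.D κ / BesselAux.f κ = besselI1 κ / besselI0 κ
  have : besselI1 κ / besselI0 κ = BesselAux.g κ / BesselAux.f κ := by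
    unfold besselI1 besselI0
    rw [show (∫ t in (0:ℝ)..Real.pi, Real.exp (κ * Real.cos t) * Real.cos t) = BesselAux.g κ from rfl,
        show (∫ t in (0:ℝ)..Real.pi, Real.exp (κ * Real.cos t)) = BesselAux.f κ from rfl]
    rw [mul_div_mul_left _ _ (by positivity : (1:ℝ)/Real.pi ≠ 0)]
  rw [this]
  field_simp
  linarith
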